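/- Let k be a commutative domain, and suppose s: k[t]/⟨t²⟩ ⊗ k[Y] → k[Y] ⊗ k[t]/⟨t²⟩ is a twisting map with ι_0(Y) = Q ≠ 0 and ι_1(Y) = P (where s(t ⊗ a) = ι_0(a) ⊗ 1 + ι_1(a) ⊗ t). Then P = −Y + p_0 for some p_0 ∈ k (i.e., P has degree 1 with leading coefficient −1). -/
import Mathlib


open TensorProduct

/-- A twisting map `s : B ⊗ A → A ⊗ B`: it is compatible with the units and
with the multiplications of `A` and `B` (stated on pure tensors, which
suffices by linearity). -/
structure IsTwistingMap (k A B : Type*) [CommRing k] [Ring A] [Ring B]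
    [Algebra k A] [Algebra k B] (s : B ⊗[k] A →ₗ[k] A ⊗[k] B) : Prop where
  unit_left : ∀ a : A, s (1 ⊗ₜ a) = a ⊗ₜ 1
  unit_right : ∀ b : B, s (b ⊗ₜ 1) = 1 ⊗ₜ b
  mul_compat_B : ∀ (b b' : B) (a : A),
    s ((b * b') ⊗ₜ a) =
      (LinearMap.lTensor A (LinearMap.mul' k B))
        ((TensorProduct.assoc k A B B)
          ((LinearMap.rTensor B s)
            ((TensorProduct.assoc k B A B).symm
              ((LinearMap.lTensor B s)
                ((TensorProduct.assoc k B B A) ((b ⊗ₜ b') ⊗ₜ a))))))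
  mul_compat_A : ∀ (b : B) (a a' : A),
    s (b ⊗ₜ (a * a')) =
      (LinearMap.rTensor B (LinearMap.mul' k A))
        ((TensorProduct.assoc k A A B).symm
          ((LinearMap.lTensor A s)
            ((TensorProduct.assoc k A B A)
              ((LinearMap.rTensor A s)
                ((TensorProduct.assoc k B A A).symm (b ⊗ₜ (a ⊗ₜ a')))))))


section Aux
open DualNumber Polynomial
set_option maxHeartbeats 1000000
set_option synthInstance.maxHeartbeats 400000

variable (k : Type*) [CommRing k]

noncomputable def φ₀ : Polynomial k ⊗[k] DualNumber k →ₗ[k] Polynomial k :=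
  (TensorProduct.rid k (Polynomial k)).toLinearMap ∘ₗ
    LinearMap.lTensor (Polynomial k) (TrivSqZeroExt.fstHom k k k).toLinearMap

noncomputable def φ₁ : Polynomial k ⊗[k] DualNumber k →ₗ[k] Polynomial k :=
  (TensorProduct.rid k (Polynomial k)).toLinearMap ∘ₗ
    LinearMap.lTensor (Polynomial k) (TrivSqZeroExt.sndHom k k)

@[simp] lemma φ₀_tmul_one (x : Polynomial k) : φ₀ k (x ⊗ₜ[k] (1 : DualNumber k)) = x := by
  simp [φ₀]

@[simp] lemma φ₀_tmul_eps (x : Polynomial k) : φ₀ k (x ⊗ₜ[k] (ε : DualNumber k)) = 0 := by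
  simp only [φ₀, LinearMap.coe_comp, Function.comp_apply, LinearMap.lTensor_tmul,
    AlgHom.toLinearMap_apply, TrivSqZeroExt.fstHom_apply, DualNumber.eps, TrivSqZeroExt.fst_inr,
    tmul_zero, map_zero, LinearEquiv.coe_coe]

@[simp] lemma φ₁_tmul_one (x : Polynomial k) : φ₁ k (x ⊗ₜ[k] (1 : DualNumber k)) = 0 := by
  simp only [φ₁, LinearMap.coe_comp, Function.comp_apply, LinearMap.lTensor_tmul,
    TrivSqZeroExt.sndHom_apply, TrivSqZeroExt.snd_one, tmul_zero, map_zero, LinearEquiv.coe_coe]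

@[simp] lemma φ₁_tmul_eps (x : Polynomial k) : φ₁ k (x ⊗ₜ[k] (ε : DualNumber k)) = x := by
  simp only [φ₁, LinearMap.coe_comp, Function.comp_apply, LinearMap.lTensor_tmul,
    TrivSqZeroExt.sndHom_apply, DualNumber.eps, TrivSqZeroExt.snd_inr, LinearEquiv.coe_coe,
    TensorProduct.rid_tmul, one_smul]

variable
    (s : DualNumber k ⊗[k] Polynomial k →ₗ[k] Polynomial k ⊗[k] DualNumber k)
    (hs : IsTwistingMap k (Polynomial k) (DualNumber k) s)
    (ι₀ ι₁ : Polynomial k →ₗ[k] Polynomial k)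
    (hι : ∀ F : Polynomial k, s ((ε : DualNumber k) ⊗ₜ F) =
      ι₀ F ⊗ₜ[k] (1 : DualNumber k) + ι₁ F ⊗ₜ[k] (ε : DualNumber k))

include hs hι

lemma keyA (F G : Polynomial k) :
    ι₀ (F * G) ⊗ₜ[k] (1 : DualNumber k) + ι₁ (F * G) ⊗ₜ[k] (ε : DualNumber k) =
      (ι₀ F * G + ι₁ F * ι₀ G) ⊗ₜ[k] (1 : DualNumber k) + (ι₁ F * ι₁ G) ⊗ₜ[k] (ε : DualNumber k) := by
  have key := hs.mul_compat_A ε F G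
  rw [hι] at key
  simp only [TensorProduct.assoc_tmul, TensorProduct.assoc_symm_tmul, LinearMap.lTensor_tmul,
    LinearMap.rTensor_tmul, map_add, hι, hs.unit_left, tmul_add, add_tmul,
    LinearMap.mul'_apply, mul_one, one_mul, LinearEquiv.coe_coe] at key
  rw [key, add_tmul]; abel

lemma i0_mul (F G : Polynomial k) : ι₀ (F * G) = ι₀ F * G + ι₁ F * ι₀ G := by
  have := congrArg (φ₀ k) (keyA k s hs ι₀ ι₁ hι F G); simpa using this

lemma i1_mul (F G : Polynomial k) : ι₁ (F * G) = ι₁ F * ι₁ G := by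
  have := congrArg (φ₁ k) (keyA k s hs ι₀ ι₁ hι F G); simpa using this

lemma keyB (F : Polynomial k) :
    (0 : Polynomial k ⊗[k] DualNumber k) =
      ι₀ (ι₀ F) ⊗ₜ[k] (1 : DualNumber k) + (ι₁ (ι₀ F) + ι₀ (ι₁ F)) ⊗ₜ[k] (ε : DualNumber k) := by
  have key := hs.mul_compat_B ε ε F
  rw [DualNumber.eps_mul_eps, zero_tmul, map_zero] at key
  simp only [TensorProduct.assoc_tmul, TensorProduct.assoc_symm_tmul, LinearMap.lTensor_tmul,
    LinearMap.rTensor_tmul, map_add, hι, tmul_add, add_tmul,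
    LinearMap.mul'_apply, mul_one, one_mul, DualNumber.eps_mul_eps, tmul_zero,
    LinearEquiv.coe_coe] at key
  rw [add_tmul, key]; abel

lemma i0_i0 (F : Polynomial k) : ι₀ (ι₀ F) = 0 := by
  have := congrArg (φ₀ k) (keyB k s hs ι₀ ι₁ hι F); simpa using this.symm

lemma i1_i0 (F : Polynomial k) : ι₁ (ι₀ F) + ι₀ (ι₁ F) = 0 := by
  have := congrArg (φ₁ k) (keyB k s hs ι₀ ι₁ hι F); simpa using this.symm

lemma i_one : ι₀ (1 : Polynomial k) ⊗ₜ[k] (1 : DualNumber k) + ι₁ (1 : Polynomial k) ⊗ₜ[k] (ε : DualNumber k)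
    = (1 : Polynomial k) ⊗ₜ[k] (ε : DualNumber k) := by
  rw [← hι, hs.unit_right]

lemma i0_one : ι₀ (1 : Polynomial k) = 0 := by
  have := congrArg (φ₀ k) (i_one k s hs ι₀ ι₁ hι); simpa using this

lemma i1_one : ι₁ (1 : Polynomial k) = 1 := by
  have := congrArg (φ₁ k) (i_one k s hs ι₀ ι₁ hι); simpa using this

lemma i1_pow (n : ℕ) : ι₁ ((X : Polynomial k)^n) = (ι₁ X)^n := by
  induction n with
  | zero => simpa using i1_one k s hs ι₀ ι₁ hι
  | succ n ih => rw [pow_succ, i1_mul k s hs ι₀ ι₁ hι, ih, pow_succ]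

lemma i1_eq (F : Polynomial k) : ι₁ F = F.comp (ι₁ X) := by
  induction F using Polynomial.induction_on' with
  | add p q hp hq => rw [map_add, hp, hq, add_comp]
  | monomial n a =>
    rw [← C_mul_X_pow_eq_monomial, ← smul_eq_C_mul, map_smul,
      i1_pow k s hs ι₀ ι₁ hι, smul_comp, smul_eq_C_mul, smul_eq_C_mul]
    simp [mul_comp, pow_comp]

lemma i0_pow (n : ℕ) : (ι₁ X - X) * ι₀ ((X : Polynomial k)^n) = ι₀ X * ((ι₁ X)^n - X^n) := by
  induction n with
  | zero => simp [i0_one k s hs ι₀ ι₁ hι]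
  | succ n ih =>
    have h : ι₀ ((X : Polynomial k)^(n+1)) = ι₀ X * X^n + ι₁ X * ι₀ (X^n) := by
      rw [pow_succ', i0_mul k s hs ι₀ ι₁ hι]
    rw [h]
    linear_combination (ι₁ (X : Polynomial k)) * ih

lemma i0_key (F : Polynomial k) :
    (ι₁ X - X) * ι₀ F = ι₀ X * (F.comp (ι₁ X) - F) := by
  induction F using Polynomial.induction_on' with
  | add p q hp hq => rw [map_add, add_comp]; linear_combination hp + hq
  | monomial n a =>
    rw [← C_mul_X_pow_eq_monomial, ← smul_eq_C_mul, map_smul, smul_comp,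
      smul_eq_C_mul, smul_eq_C_mul, smul_eq_C_mul]
    simp only [mul_comp, pow_comp, X_comp, C_comp]
    linear_combination (C a) * i0_pow k s hs ι₀ ι₁ hι n

theorem endgame [IsDomain k] (hQ : ι₀ (X : Polynomial k) ≠ 0) :
    ∃ p₀ : k, ι₁ (X : Polynomial k) = -X + C p₀ := by
  set P : Polynomial k := ι₁ X with hP
  set Q : Polynomial k := ι₀ X with hQdef
  -- Q ∘ P = Q
  have hQP : Q.comp P = Q := by
    have h1 : ι₀ Q = 0 := i0_i0 k s hs ι₀ ι₁ hι X
    have h2 := i0_key k s hs ι₀ ι₁ hι Q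
    rw [h1, mul_zero] at h2
    rcases mul_eq_zero.mp h2.symm with h | h
    · exact absurd h hQ
    · exact sub_eq_zero.mp h
  -- ι₀ P = -Q
  have hiP : ι₀ P = -Q := by
    have h6 := i1_i0 k s hs ι₀ ι₁ hι X
    have := i1_eq k s hs ι₀ ι₁ hι Q
    rw [← hQdef, ← hP] at h6
    rw [this, hQP] at h6
    linear_combination h6
  -- P ∘ P = X
  have hcomp : P.comp P = X := by
    have h := i0_key k s hs ι₀ ι₁ hι P
    rw [hiP] at h
    have h2 : Q * (P.comp P - X) = 0 := by linear_combination -h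
    rcases mul_eq_zero.mp h2 with h3 | h3
    · exact absurd h3 hQ
    · exact sub_eq_zero.mp h3
  -- deg P = 1
  have hdeg : P.natDegree = 1 := by
    have := congrArg natDegree hcomp
    rw [natDegree_comp, natDegree_X] at this
    nlinarith [this]
  obtain ⟨a, ha0, b, hab⟩ := natDegree_eq_one.mp hdeg
  -- coefficient relations
  have e : C (a*a) * X + C (a*b + b) = X := by
    have h' : (C a * X + C b).comp (C a * X + C b) = X := by rw [hab]; exact hcomp
    refine Eq.trans ?_ h'
    simp only [add_comp, mul_comp, C_comp, X_comp, map_mul, map_add]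
    ring
  have h1 : a * a = 1 := by
    have := congrArg (fun q => Polynomial.coeff q 1) e
    simpa [coeff_C] using this
  have h0 : a * b + b = 0 := by
    have := congrArg (fun q => Polynomial.coeff q 0) e
    simpa [coeff_C] using this
  -- a = -1
  have ha : a = -1 := by
    have hfac : (a - 1) * (a + 1) = 0 := by linear_combination h1
    rcases mul_eq_zero.mp hfac with h | h
    · -- a = 1
      have ha1 : a = 1 := by linear_combination h
      have h2b : b * 2 = 0 := by linear_combination h0 - b * ha1
      have h20 : (2 : k) = 0 := by
        rcases mul_eq_zero.mp h2b with hb | h2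
        · -- b = 0, P = X
          have hPX : P = X := by rw [← hab, ha1, hb]; simp
          have : Q = -Q := by rw [← hiP, hPX]
          have h2Q : C (2:k) * Q = 0 := by
            have : Q + Q = 0 := by linear_combination this
            calc C (2:k) * Q = Q + Q := by
                  rw [show (2:k) = 1 + 1 by norm_num, map_add, map_one]; ring
              _ = 0 := this
          rcases mul_eq_zero.mp h2Q with hc | hc
          · exact_mod_cast (C_eq_zero.mp hc)
          · exact absurd hc hQ
        · exact h2
      linear_combination h + h20
    · linear_combination h
  refine ⟨b, ?_⟩
  rw [← hab, ha]
  simp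

end Aux

open DualNumber Polynomial in
theorem stmt18 (k : Type*) [CommRing k] [IsDomain k]
    (s : DualNumber k ⊗[k] Polynomial k →ₗ[k] Polynomial k ⊗[k] DualNumber k)
    (hs : IsTwistingMap k (Polynomial k) (DualNumber k) s)
    (ι₀ ι₁ : Polynomial k →ₗ[k] Polynomial k)
    (hι : ∀ F : Polynomial k, s ((ε : DualNumber k) ⊗ₜ F) =
      ι₀ F ⊗ₜ (1 : DualNumber k) + ι₁ F ⊗ₜ (ε : DualNumber k))
    (hQ : ι₀ (X : Polynomial k) ≠ 0) :
    ∃ p₀ : k, ι₁ (X : Polynomial k) = -X + C p₀ := by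
  exact endgame k s hs ι₀ ι₁ hι hQ
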